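/- Suppose T_n is a sequence of real random variables converging in distribution to a law with continuous strictly increasing CDF H, and F_n is a sequence of random CDFs with sup_x |F_n(x) − H_n(x)| → 0 in probability, where H_n is the CDF of T_n and sup_x |H_n(x) − H(x)| → 0. Then the random variable F_n(T_n) converges in distribution to the uniform distribution on [0,1]. -/
import Mathlib


open MeasureTheory Filter

/-- If `Tₙ` converges in distribution to a law with continuous strictly increasing CDF `H`
(`Hₙ` being the CDF of `Tₙ`, with `sup_x |Hₙ − H| → 0`), and `Fₙ` are random CDF estimators
with `sup_x |Fₙ − Hₙ| → 0` in probability, then `Fₙ(Tₙ)` converges in distribution to the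
uniform distribution on `[0,1]`: its CDF converges pointwise to `U(x) = max 0 (min x 1)`. -/
theorem prepivoted_statistic_uniform_limit
    {Ω : Type*} [MeasurableSpace Ω] (μ : Measure Ω) [IsProbabilityMeasure μ]
    (T : ℕ → Ω → ℝ) (hT : ∀ n, Measurable (T n))
    (Hn : ℕ → ℝ → ℝ) (H : ℝ → ℝ) (F : ℕ → Ω → ℝ → ℝ)
    (hHn : ∀ n x, Hn n x = (μ {ω | T n ω ≤ x}).toReal)
    (hHcont : Continuous H) (hHmono : StrictMono H)
    (hHBot : Tendsto H atBot (nhds 0)) (hHTop : Tendsto H atTop (nhds 1))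
    -- sup_x |Hₙ(x) − H(x)| → 0
    (hHnH : ∀ ε > (0:ℝ), ∀ᶠ n in atTop, ∀ x : ℝ, |Hn n x - H x| < ε)
    -- sup_x |Fₙ(x) − Hₙ(x)| → 0 in probability
    (hFnHn : ∀ ε > (0:ℝ),
      Tendsto (fun n => μ {ω | ∃ x : ℝ, ε ≤ |F n ω x - Hn n x|}) atTop (nhds 0)) :
    ∀ x : ℝ,
      Tendsto (fun n => (μ {ω | F n ω (T n ω) ≤ x}).toReal) atTop
        (nhds (max 0 (min x 1))) := by
  intro x
  -- basic facts about H
  have hHge0 : ∀ s, 0 ≤ H s := fun s =>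
    le_of_tendsto hHBot (eventually_atBot.2 ⟨s, fun u hu => hHmono.monotone hu⟩)
  have hHle1 : ∀ s, H s ≤ 1 := fun s =>
    ge_of_tendsto hHTop (eventually_atTop.2 ⟨s, fun u hu => hHmono.monotone hu⟩)
  have hH0 : ∀ t, 0 < H t := fun t =>
    lt_of_le_of_lt (hHge0 (t - 1)) (hHmono (by linarith))
  have hH1 : ∀ t, H t < 1 := fun t =>
    lt_of_lt_of_le (hHmono (show t < t + 1 by linarith)) (hHle1 (t + 1))
  have hsurj : ∀ y : ℝ, 0 < y → y < 1 → ∃ t, H t = y := by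
    intro y hy0 hy1
    obtain ⟨a, ha⟩ := (hHBot.eventually (eventually_lt_nhds hy0)).exists
    obtain ⟨b, hb⟩ := (hHTop.eventually (eventually_gt_nhds hy1)).exists
    exact intermediate_value_univ a b hHcont ⟨ha.le, hb.le⟩
  -- key estimate: for n with uniformly-close Hn, P(H(T_n) ≤ y) is δ-close to y
  have key : ∀ δ : ℝ, ∀ n, (∀ t, |Hn n t - H t| < δ) → ∀ y : ℝ, 0 < y → y < 1 →
      |(μ {ω | H (T n ω) ≤ y}).toReal - y| < δ := by
    intro δ n hn y hy0 hy1
    obtain ⟨t, ht⟩ := hsurj y hy0 hy1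
    have hset : {ω | H (T n ω) ≤ y} = {ω | T n ω ≤ t} := by
      ext ω
      simp only [Set.mem_setOf_eq, ← ht, hHmono.le_iff_le]
    rw [hset, ← hHn n t, ← ht]
    exact hn t
  set U : ℝ := max 0 (min x 1) with hU
  have hU0 : 0 ≤ U := le_max_left _ _
  have hU1 : U ≤ 1 := max_le (by norm_num) (min_le_right _ _)
  rw [Metric.tendsto_atTop]
  intro ε hε
  set δ : ℝ := ε / 5 with hδdef
  have hδ : 0 < δ := by positivity
  have hbad : ∀ᶠ n in atTop,
      (μ {ω | ∃ t : ℝ, δ ≤ |F n ω t - Hn n t|}).toReal < δ := by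
    have h1 : ∀ᶠ n in atTop,
        μ {ω | ∃ t : ℝ, δ ≤ |F n ω t - Hn n t|} < ENNReal.ofReal δ := by
      refine (hFnHn δ hδ).eventually_lt_const ?_
      simpa using hδ
    filter_upwards [h1] with n hn
    exact ENNReal.toReal_lt_of_lt_ofReal hn
  have hHnH' := hHnH δ hδ
  rw [eventually_atTop] at hbad hHnH'
  obtain ⟨N1, hN1⟩ := hbad
  obtain ⟨N2, hN2⟩ := hHnH'
  refine ⟨max N1 N2, fun n hn => ?_⟩
  have hb : (μ {ω | ∃ t : ℝ, δ ≤ |F n ω t - Hn n t|}).toReal < δ :=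
    hN1 n (le_trans (le_max_left _ _) hn)
  have hh : ∀ t, |Hn n t - H t| < δ := hN2 n (le_trans (le_max_right _ _) hn)
  set bad : Set Ω := {ω | ∃ t : ℝ, δ ≤ |F n ω t - Hn n t|} with hbad_def
  set A : Set Ω := {ω | F n ω (T n ω) ≤ x} with hA_def
  have hAnn : (0:ℝ) ≤ (μ A).toReal := ENNReal.toReal_nonneg
  have toReal_le_one : ∀ s : Set Ω, (μ s).toReal ≤ 1 := by
    intro s
    calc (μ s).toReal ≤ (1 : ENNReal).toReal :=
          ENNReal.toReal_mono (by simp) (prob_le_one (μ := μ) (s := s))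
      _ = 1 := by simp
  have hA1 : (μ A).toReal ≤ 1 := toReal_le_one A
  -- generic set-measure subadditivity in ℝ
  have subadd : ∀ (S1 S2 S3 : Set Ω), S1 ⊆ S2 ∪ S3 →
      (μ S1).toReal ≤ (μ S2).toReal + (μ S3).toReal := by
    intro S1 S2 S3 hsub
    have h : μ S1 ≤ μ S2 + μ S3 := (measure_mono hsub).trans (measure_union_le S2 S3)
    calc (μ S1).toReal ≤ (μ S2 + μ S3).toReal :=
          ENNReal.toReal_mono (ENNReal.add_ne_top.2 ⟨measure_ne_top μ _, measure_ne_top μ _⟩) h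
      _ = (μ S2).toReal + (μ S3).toReal :=
          ENNReal.toReal_add (measure_ne_top μ _) (measure_ne_top μ _)
  -- Upper bound: (μ A).toReal ≤ U + 4δ
  have hupper : (μ A).toReal ≤ U + 4 * δ := by
    rcases le_or_gt 1 x with hx1 | hx1
    · have : U = 1 := by
        rw [hU, min_eq_right hx1, max_eq_right (by norm_num : (0:ℝ) ≤ 1)]
      linarith
    · have hxU : x ≤ U := by
        rw [hU, min_eq_left hx1.le]; exact le_max_right _ _
      have hsub : A ⊆ bad ∪ {ω | H (T n ω) ≤ x + 2 * δ} := by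
        intro ω hω
        by_cases hbω : ω ∈ bad
        · exact Or.inl hbω
        · right
          simp only [hbad_def, Set.mem_setOf_eq, not_exists, not_le] at hbω
          have h1 := abs_lt.1 (hbω (T n ω))
          have h2 := abs_lt.1 (hh (T n ω))
          simp only [hA_def, Set.mem_setOf_eq] at hω
          simp only [Set.mem_setOf_eq]
          linarith [h1.1, h2.1]
      have hA_le := subadd A bad {ω | H (T n ω) ≤ x + 2 * δ} hsub
      rcases le_or_gt (x + 2 * δ) 0 with hc | hc
      · have hempty : {ω | H (T n ω) ≤ x + 2 * δ} = (∅ : Set Ω) := by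
          ext ω
          simp only [Set.mem_setOf_eq, Set.mem_empty_iff_false, iff_false, not_le]
          exact lt_of_le_of_lt hc (hH0 _)
        rw [hempty] at hA_le
        simp only [measure_empty, ENNReal.toReal_zero, add_zero] at hA_le
        linarith
      · rcases le_or_gt 1 (x + 2 * δ) with hc1 | hc1
        · have hS1 : (μ {ω | H (T n ω) ≤ x + 2 * δ}).toReal ≤ 1 :=
            toReal_le_one _
          linarith
        · have hk := abs_lt.1 (key δ n hh (x + 2 * δ) hc hc1)
          linarith [hk.2]
  -- Lower bound: U - 4δ ≤ (μ A).toReal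
  have hlower : U - 4 * δ ≤ (μ A).toReal := by
    set S' : Set Ω := {ω | H (T n ω) ≤ x - 2 * δ} with hS'_def
    have hsub : S' ⊆ A ∪ bad := by
      intro ω hω
      by_cases hbω : ω ∈ bad
      · exact Or.inr hbω
      · left
        simp only [hbad_def, Set.mem_setOf_eq, not_exists, not_le] at hbω
        have h1 := abs_lt.1 (hbω (T n ω))
        have h2 := abs_lt.1 (hh (T n ω))
        simp only [hS'_def, Set.mem_setOf_eq] at hω
        simp only [hA_def, Set.mem_setOf_eq]
        linarith [h1.2, h2.2]
    have hS'_le := subadd S' A bad hsub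
    rcases le_or_gt (x - 2 * δ) 0 with hc | hc
    · -- U ≤ 2δ in this case
      have hx2 : x ≤ 2 * δ := by linarith
      have : U ≤ 2 * δ := by
        rw [hU]
        exact max_le (by linarith) (le_trans (min_le_left _ _) hx2)
      linarith
    · rcases le_or_gt 1 (x - 2 * δ) with hc1 | hc1
      · have hfull : S' = Set.univ := by
          ext ω
          simp only [hS'_def, Set.mem_setOf_eq, Set.mem_univ, iff_true]
          exact le_trans (hH1 _).le hc1
        have : (μ S').toReal = 1 := by rw [hfull]; simp
        linarith
      · have hk := abs_lt.1 (key δ n hh (x - 2 * δ) hc hc1)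
        have hxU : U ≤ x := by
          rw [hU]
          exact max_le (by linarith) (le_trans (min_le_left _ _) le_rfl)
        linarith [hk.1]
  have hεδ : ε = 5 * δ := by rw [hδdef]; ring
  rw [Real.dist_eq, abs_lt]
  constructor
  · linarith
  · linarith
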